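/- Let G be a finite simple graph whose vertex set is partitioned into k cliques V_1,…,V_k, and let G'_5 be the associated constructed graph with A = 5. If G'_5 has a minimal dominating set of size at least 5k, then G has an independent set of size at least k. -/
import Mathlib


/-- `D` is a dominating set of `G`: every vertex belongs to `D` or has a neighbor in `D`. -/
def Dominates {V : Type*} (G : SimpleGraph V) (D : Set V) : Prop :=
  ∀ v : V, v ∈ D ∨ ∃ u ∈ D, G.Adj u v

/-- `D` is a minimal dominating set of `G`: dominating, and no proper subset dominates. -/
def MinimalDominatingSet {V : Type*} (G : SimpleGraph V) (D : Set V) : Prop :=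
  Dominates G D ∧ ∀ D' : Set V, D' ⊂ D → ¬ Dominates G D'

/-- `I` is an independent set of `G`: no two of its vertices are adjacent. -/
def IndepSet {V : Type*} (G : SimpleGraph V) (I : Set V) : Prop :=
  ∀ u ∈ I, ∀ v ∈ I, ¬ G.Adj u v

/-- The constructed graph `G'_A`.  Vertices are the pairs `(u, a)` with `u ∈ V(G)`,
`1 ≤ a ≤ A` (the copy `(u, a)` lies in the independent set `Z_u`), together with the
vertices `z_1, …, z_k`.  Two vertices `(u, a)`, `(v, b)` are adjacent iff `uv ∈ E(G)`
(in particular `u ≠ v`); `z_i` is adjacent exactly to the vertices `(u, a)` with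
`u ∈ V_i` (i.e. `c u = i`); the `z_i` are pairwise non-adjacent.  The partition of
`V(G)` into the `k` cliques `V_1, …, V_k` is encoded by the map `c : V → Fin k`. -/
def primeGraph {V : Type*} {k : ℕ} (G : SimpleGraph V) (c : V → Fin k) (A : ℕ) :
    SimpleGraph ((V × Fin A) ⊕ Fin k) :=
  SimpleGraph.fromRel fun x y =>
    match x, y with
    | Sum.inl (u, _), Sum.inl (v, _) => G.Adj u v
    | Sum.inl (u, _), Sum.inr i => c u = i
    | _, _ => False

lemma pg_adj_inl_inl {V : Type*} {k : ℕ} {G : SimpleGraph V} {c : V → Fin k} {A : ℕ}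
    {u v : V} {a b : Fin A} :
    (primeGraph G c A).Adj (Sum.inl (u,a)) (Sum.inl (v,b)) ↔ G.Adj u v := by
  rw [primeGraph, SimpleGraph.fromRel_adj]
  constructor
  · rintro ⟨hne, h | h⟩
    · exact h
    · exact h.symm
  · intro h
    exact ⟨by simp [h.ne], Or.inl h⟩

lemma pg_adj_inl_inr {V : Type*} {k : ℕ} {G : SimpleGraph V} {c : V → Fin k} {A : ℕ}
    {u : V} {a : Fin A} {i : Fin k} :
    (primeGraph G c A).Adj (Sum.inl (u,a)) (Sum.inr i) ↔ c u = i := by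
  rw [primeGraph, SimpleGraph.fromRel_adj]
  constructor
  · rintro ⟨hne, h | h⟩
    · exact h
    · exact h.elim
  · intro h
    exact ⟨by simp, Or.inl h⟩

lemma pg_not_adj_inr_inr {V : Type*} {k : ℕ} {G : SimpleGraph V} {c : V → Fin k} {A : ℕ}
    {i j : Fin k} : ¬ (primeGraph G c A).Adj (Sum.inr i) (Sum.inr j) := by
  rw [primeGraph, SimpleGraph.fromRel_adj]
  rintro ⟨hne, h | h⟩ <;> exact h

lemma pg_copy {V : Type*} {k : ℕ} {G : SimpleGraph V} {c : V → Fin k} {A : ℕ}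
    {u : V} (a b : Fin A) {x} (h : (primeGraph G c A).Adj (Sum.inl (u,a)) x) :
    (primeGraph G c A).Adj (Sum.inl (u,b)) x := by
  rcases x with ⟨v, bb⟩ | i
  · rw [pg_adj_inl_inl] at h ⊢; exact h
  · rw [pg_adj_inl_inr] at h ⊢; exact h

theorem stmt6 {V : Type*} [Fintype V] (G : SimpleGraph V) (k : ℕ) (c : V → Fin k)
    (hclique : ∀ u v : V, u ≠ v → c u = c v → G.Adj u v)
    (hsurj : Function.Surjective c)
    (hD : ∃ D : Set ((V × Fin 5) ⊕ Fin k),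
      MinimalDominatingSet (primeGraph G c 5) D ∧ 5 * k ≤ D.ncard) :
    ∃ I : Set V, IndepSet G I ∧ k ≤ I.ncard := by
  classical
  obtain ⟨D, ⟨hdom, hmin⟩, hcard⟩ := hD
  set G' := primeGraph G c 5 with hG'
  -- Claim A: two copies of u in D ⇒ no vertex of D is adjacent to a copy of u
  have claimA : ∀ (u : V) (a a' : Fin 5), a ≠ a' → Sum.inl (u,a) ∈ D → Sum.inl (u,a') ∈ D →
      ∀ w ∈ D, ¬ G'.Adj w (Sum.inl (u,a)) := by
    intro u a a' hne ha ha' w hw hadj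
    refine hmin (D \ {Sum.inl (u,a)}) (Set.sdiff_singleton_ssubset.mpr ha) ?_
    intro v
    by_cases hv : v = Sum.inl (u,a)
    · subst hv
      exact Or.inr ⟨w, ⟨hw, by simpa using hadj.ne⟩, hadj⟩
    · rcases hdom v with hvD | ⟨e, he, hadje⟩
      · exact Or.inl ⟨hvD, by simpa using hv⟩
      · by_cases he' : e = Sum.inl (u,a)
        · subst he'
          refine Or.inr ⟨Sum.inl (u,a'), ⟨ha', by simp [hne.symm]⟩, pg_copy a a' hadje⟩
        · exact Or.inr ⟨e, ⟨he, by simpa using he'⟩, hadje⟩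
  -- Claim B: two copies of u in D ⇒ all copies in D
  have claimB : ∀ (u : V) (a a' : Fin 5), a ≠ a' → Sum.inl (u,a) ∈ D → Sum.inl (u,a') ∈ D →
      ∀ b, Sum.inl (u,b) ∈ D := by
    intro u a a' hne ha ha' b
    by_contra hb
    rcases hdom (Sum.inl (u,b)) with h | ⟨e, he, hadje⟩
    · exact hb h
    · exact claimA u a a' hne ha ha' e he (pg_copy b a hadje.symm).symm
  -- private neighbors
  have priv : ∀ d ∈ D, ∃ x, (x ∉ D ∨ x = d) ∧ ∀ e ∈ D, e ≠ d → ¬ G'.Adj e x := by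
    intro d hd
    have h1 : ¬ Dominates G' (D \ {d}) := hmin _ (Set.sdiff_singleton_ssubset.mpr hd)
    rw [Dominates] at h1
    push_neg at h1
    obtain ⟨x, hx1, hx2⟩ := h1
    refine ⟨x, ?_, fun e he hne => hx2 e ⟨he, by simpa using hne⟩⟩
    by_cases hxd : x = d
    · exact Or.inr hxd
    · exact Or.inl (fun hxD => hx1 ⟨hxD, by simpa using hxd⟩)
  -- counting setup
  have hDfin : D.Finite := Set.toFinite D
  set DF : Finset ((V × Fin 5) ⊕ Fin k) := hDfin.toFinset with hDFdef
  have memDF : ∀ d, d ∈ DF ↔ d ∈ D := fun d => hDfin.mem_toFinset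
  have hDFcard : 5 * k ≤ DF.card := by
    rwa [Set.ncard_eq_toFinset_card D hDfin] at hcard
  set bIdx : ((V × Fin 5) ⊕ Fin k) → Fin k := Sum.elim (fun p => c p.1) id with hbIdx
  have bIdx_inl : ∀ (u : V) (a : Fin 5), bIdx (Sum.inl (u,a)) = c u := fun _ _ => rfl
  have bIdx_inr : ∀ i : Fin k, bIdx (Sum.inr i) = i := fun _ => rfl
  set fib : Fin k → Finset ((V × Fin 5) ⊕ Fin k) :=
    fun i => DF.filter (fun d => bIdx d = i) with hfibdef
  have memfib : ∀ d i, d ∈ fib i ↔ d ∈ D ∧ bIdx d = i := by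
    intro d i
    rw [hfibdef]
    simp [Finset.mem_filter, memDF]
  -- Lemma Z : if the z-vertex of block j is in D, the block has at most 2 elements of D
  have lemZ : ∀ j : Fin k, Sum.inr j ∈ D → (fib j).card ≤ 2 := by
    intro j hj
    obtain ⟨x, hx1, hx2⟩ := priv (Sum.inr j) hj
    rcases x with ⟨v, bv⟩ | j'
    · -- x = inl (v, bv)
      have hxD : Sum.inl (v,bv) ∉ D := by
        rcases hx1 with h | h
        · exact h
        · exact absurd h (by simp)
      by_cases hcv : c v = j
      · -- block j is contained in {inr j} ∪ (single copy of v)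
        have hvsing : ∀ b b' : Fin 5, Sum.inl (v,b) ∈ D → Sum.inl (v,b') ∈ D → b = b' := by
          intro b b' hb hb'
          by_contra hne
          exact claimA v b b' hne hb hb' (Sum.inr j) hj (pg_adj_inl_inr.mpr hcv).symm
        by_cases hv : ∃ b, Sum.inl (v,b) ∈ D
        · obtain ⟨av, hav⟩ := hv
          have hsub : fib j ⊆ {Sum.inr j, Sum.inl (v,av)} := by
            intro e he
            rw [memfib] at he
            obtain ⟨heD, hbe⟩ := he
            rcases e with ⟨w, bw⟩ | j2
            · rw [bIdx_inl] at hbe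
              by_cases hwv : w = v
              · subst hwv
                have := hvsing bw av heD hav
                subst this
                simp
              · exfalso
                have hadj : G'.Adj (Sum.inl (w,bw)) (Sum.inl (v,bv)) :=
                  pg_adj_inl_inl.mpr (hclique w v hwv (hbe.trans hcv.symm))
                exact hx2 _ heD (by simp) hadj
            · rw [bIdx_inr] at hbe
              subst hbe
              simp
          exact (Finset.card_le_card hsub).trans (by
            exact (Finset.card_insert_le _ _).trans (by simp))
        · push_neg at hv
          have hsub : fib j ⊆ {Sum.inr j} := by
            intro e he
            rw [memfib] at he
            obtain ⟨heD, hbe⟩ := he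
            rcases e with ⟨w, bw⟩ | j2
            · rw [bIdx_inl] at hbe
              by_cases hwv : w = v
              · subst hwv; exact absurd heD (hv bw)
              · exfalso
                have hadj : G'.Adj (Sum.inl (w,bw)) (Sum.inl (v,bv)) :=
                  pg_adj_inl_inl.mpr (hclique w v hwv (hbe.trans hcv.symm))
                exact hx2 _ heD (by simp) hadj
            · rw [bIdx_inr] at hbe
              subst hbe
              simp
          exact (Finset.card_le_card hsub).trans (by simp)
      · -- c v ≠ j : x is not dominated, contradiction
        exfalso
        rcases hdom (Sum.inl (v,bv)) with h | ⟨e, he, hadje⟩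
        · exact hxD h
        · refine hx2 e he ?_ hadje
          rintro rfl
          exact hcv (pg_adj_inl_inr.mp hadje.symm)
    · -- x = inr j'
      by_cases hj' : j' = j
      · subst hj'
        have hsub : fib j' ⊆ {Sum.inr j'} := by
          intro e he
          rw [memfib] at he
          obtain ⟨heD, hbe⟩ := he
          rcases e with ⟨w, bw⟩ | j2
          · rw [bIdx_inl] at hbe
            exact absurd (pg_adj_inl_inr.mpr hbe) (hx2 _ heD (by simp))
          · rw [bIdx_inr] at hbe
            subst hbe
            simp
        exact (Finset.card_le_card hsub).trans (by simp)
      · exfalso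
        have hxD : Sum.inr j' ∉ D := by
          rcases hx1 with h | h
          · exact h
          · simp only [Sum.inr.injEq] at h
            exact absurd h hj'
        rcases hdom (Sum.inr j') with h | ⟨e, he, hadje⟩
        · exact hxD h
        · refine hx2 e he ?_ hadje
          rintro rfl
          exact pg_not_adj_inr_inr hadje
  -- crux: a vertex of a crowded block with no full vertex points to a singleton block
  have crux : ∀ (u : V) (a : Fin 5), Sum.inl (u,a) ∈ D →
      (∀ w, c w = c u → ∃ b, Sum.inl (w,b) ∉ D) → 3 ≤ (fib (c u)).card →
      ∃ (j : Fin k) (v : V) (av : Fin 5), fib j = {Sum.inl (v,av)} ∧ G.Adj u v ∧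
        (∀ w b, Sum.inl (w,b) ∈ D → G.Adj w v → w = u) ∧
        (∀ b, Sum.inl (u,b) ∈ D → b = a) := by
    intro u a ha hNF hcrowd
    -- u is single
    have husing : ∀ b, Sum.inl (u,b) ∈ D → b = a := by
      intro b hb
      by_contra hne
      obtain ⟨b', hb'⟩ := hNF u rfl
      exact hb' (claimB u b a hne hb ha b')
    -- there is another supported vertex in the block of u
    have hother : ∃ w bw, Sum.inl (w,bw) ∈ D ∧ c w = c u ∧ w ≠ u := by
      by_contra hno
      push_neg at hno
      have hsub : fib (c u) ⊆ {Sum.inl (u,a), Sum.inr (c u)} := by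
        intro e he
        rw [memfib] at he
        obtain ⟨heD, hbe⟩ := he
        rcases e with ⟨w, bw⟩ | j2
        · rw [bIdx_inl] at hbe
          have hw := hno w bw heD hbe
          subst hw
          have := husing bw heD
          subst this
          simp
        · rw [bIdx_inr] at hbe
          subst hbe
          simp
      have h2 : ({Sum.inl (u,a), Sum.inr (c u)} : Finset ((V × Fin 5) ⊕ Fin k)).card ≤ 2 :=
        (Finset.card_insert_le _ _).trans (by simp)
      have := (Finset.card_le_card hsub).trans h2
      omega
    obtain ⟨w, bw, hw, hcw, hwne⟩ := hother
    obtain ⟨x, hx1, hx2⟩ := priv (Sum.inl (u,a)) ha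
    rcases x with ⟨v, bv⟩ | jx
    · -- x = inl (v, bv)
      have hvu : v ≠ u := by
        rintro rfl
        by_cases hbva : bv = a
        · subst hbva
          exact hx2 (Sum.inl (w,bw)) hw (by simp [hwne])
            (pg_adj_inl_inl.mpr (hclique w v hwne hcw))
        · have hxD : Sum.inl (v,bv) ∉ D := fun h => hbva (husing bv h)
          rcases hdom (Sum.inl (v,bv)) with h | ⟨e, he, hadje⟩
          · exact hxD h
          · by_cases he' : e = Sum.inl (v,a)
            · subst he'
              exact (G.irrefl (pg_adj_inl_inl.mp hadje))
            · exact hx2 e he he' hadje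
      have hxD : Sum.inl (v,bv) ∉ D := by
        rcases hx1 with h | h
        · exact h
        · simp only [Sum.inl.injEq, Prod.mk.injEq] at h
          exact absurd h.1 hvu
      -- u is adjacent to v in G
      have hadjuv : G.Adj u v := by
        rcases hdom (Sum.inl (v,bv)) with h | ⟨e, he, hadje⟩
        · exact absurd h hxD
        · by_cases he' : e = Sum.inl (u,a)
          · subst he'
            exact pg_adj_inl_inl.mp hadje
          · exact absurd hadje (hx2 e he he')
      -- u is the only supported neighbor of v
      have huniq : ∀ w' b', Sum.inl (w',b') ∈ D → G.Adj w' v → w' = u := by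
        intro w' b' hw' hadj'
        by_contra hne'
        exact hx2 _ hw' (by simp [hne']) (pg_adj_inl_inl.mpr hadj')
      -- the z-vertex of the block of v is not in D
      have hzv : Sum.inr (c v) ∉ D := by
        intro hz
        exact hx2 _ hz (by simp) (pg_adj_inl_inr.mpr rfl).symm
      -- v is in a different block than u
      have hcvu : c v ≠ c u := by
        intro hcv
        by_cases hwv : w = v
        · subst hwv
          -- w = v is a supported vertex of u's block; find a third element
          have hvsing : ∀ b b' : Fin 5, Sum.inl (w,b) ∈ D → Sum.inl (w,b') ∈ D → b = b' := by
            intro b b' hb hb'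
            by_contra hne
            obtain ⟨b'', hb''⟩ := hNF w hcv
            exact hb'' (claimB w b b' hne hb hb' b'')
          have hnsub : ¬ (fib (c u) ⊆ {Sum.inl (u,a), Sum.inl (w,bw)}) := by
            intro hsub
            have h2 : ({Sum.inl (u,a), Sum.inl (w,bw)} : Finset ((V × Fin 5) ⊕ Fin k)).card ≤ 2 :=
              (Finset.card_insert_le _ _).trans (by simp)
            have := (Finset.card_le_card hsub).trans h2
            omega
          obtain ⟨e, hef, hemem⟩ := Finset.not_subset.mp hnsub
          rw [memfib] at hef
          obtain ⟨heD, hbe⟩ := hef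
          rcases e with ⟨w2, b2⟩ | j2
          · rw [bIdx_inl] at hbe
            by_cases hw2u : w2 = u
            · subst hw2u
              exact hemem (by simp [husing b2 heD])
            · by_cases hw2v : w2 = w
              · subst hw2v
                exact hemem (by simp [hvsing b2 bw heD hw])
              · exact hw2u (huniq w2 b2 heD (hclique w2 w hw2v (hbe.trans hcv.symm)))
          · rw [bIdx_inr] at hbe
            subst hbe
            exact hzv (hcv ▸ heD)
        · exact hwne (huniq w bw hw (hclique w v hwv (hcw.trans hcv.symm)))
      -- v is supported
      have hvsupp : ∃ av, Sum.inl (v,av) ∈ D := by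
        rcases hdom (Sum.inr (c v)) with h | ⟨e, he, hadje⟩
        · exact absurd h hzv
        · rcases e with ⟨v2, b2⟩ | j2
          · have hcv2 : c v2 = c v := pg_adj_inl_inr.mp hadje
            by_cases hv2 : v2 = v
            · exact ⟨b2, hv2 ▸ he⟩
            · exfalso
              have := huniq v2 b2 he (hclique v2 v hv2 hcv2)
              subst this
              exact hcvu (hcv2.symm ▸ rfl)
          · exact absurd hadje pg_not_adj_inr_inr
      obtain ⟨av, hav⟩ := hvsupp
      have hvsing : ∀ b, Sum.inl (v,b) ∈ D → b = av := by
        intro b hb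
        by_contra hne
        exact claimA v b av hne hb hav (Sum.inl (u,a)) ha (pg_adj_inl_inl.mpr hadjuv)
      have hfibv : fib (c v) = {Sum.inl (v,av)} := by
        refine Finset.Subset.antisymm ?_ ?_
        · intro e he
          rw [memfib] at he
          obtain ⟨heD, hbe⟩ := he
          rcases e with ⟨w2, b2⟩ | j2
          · rw [bIdx_inl] at hbe
            by_cases hw2 : w2 = v
            · subst hw2
              simp [hvsing b2 heD]
            · exfalso
              have := huniq w2 b2 heD (hclique w2 v hw2 hbe)
              subst this
              exact hcvu (hbe.symm ▸ rfl)
          · rw [bIdx_inr] at hbe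
            subst hbe
            exact absurd heD hzv
        · intro e he
          rw [Finset.mem_singleton] at he
          subst he
          exact (memfib _ _).mpr ⟨hav, rfl⟩
      exact ⟨c v, v, av, hfibv, hadjuv, huniq, husing⟩
    · -- x = inr jx : impossible
      exfalso
      have hxD : Sum.inr jx ∉ D := by
        rcases hx1 with h | h
        · exact h
        · exact absurd h (by simp)
      rcases hdom (Sum.inr jx) with h | ⟨e, he, hadje⟩
      · exact hxD h
      · by_cases he' : e = Sum.inl (u,a)
        · subst he'
          have hju : c u = jx := pg_adj_inl_inr.mp hadje
          exact hx2 (Sum.inl (w,bw)) hw (by simp [hwne])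
            (pg_adj_inl_inr.mpr (hcw.trans hju))
        · exact hx2 e he he' hadje
  -- blocks containing a "full" vertex
  set PP : Fin k → Prop := fun i => ∃ w, c w = i ∧ ∀ b : Fin 5, Sum.inl (w,b) ∈ D with hPP
  set PF : Finset (Fin k) := Finset.univ.filter PP with hPF
  set EF : Finset (Fin k) := Finset.univ.filter (fun i => ¬ PP i) with hEF
  set s1 : Finset ((V × Fin 5) ⊕ Fin k) := DF.filter (fun d => PP (bIdx d)) with hs1
  set s2 : Finset ((V × Fin 5) ⊕ Fin k) := DF.filter (fun d => ¬ PP (bIdx d)) with hs2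
  -- blocks with a full vertex contribute at most 5
  have hmaps1 : ∀ d ∈ s1, bIdx d ∈ PF := by
    intro d hd
    rw [hs1, Finset.mem_filter] at hd
    rw [hPF, Finset.mem_filter]
    exact ⟨Finset.mem_univ _, hd.2⟩
  have bound1 : ∀ i ∈ PF, (s1.filter (fun d => bIdx d = i)).card ≤ 5 := by
    intro i hi
    rw [hPF, Finset.mem_filter] at hi
    obtain ⟨wf, hcwf, hwfull⟩ := hi.2
    have h01 : (0 : Fin 5) ≠ 1 := by decide
    have hsub : s1.filter (fun d => bIdx d = i) ⊆
        Finset.univ.image (fun b : Fin 5 => (Sum.inl (wf,b) : (V × Fin 5) ⊕ Fin k)) := by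
      intro e he
      rw [Finset.mem_filter, hs1, Finset.mem_filter] at he
      obtain ⟨⟨heDF, _⟩, hbe⟩ := he
      have heD : e ∈ D := (memDF e).mp heDF
      rcases e with ⟨w2, b2⟩ | j2
      · rw [bIdx_inl] at hbe
        by_cases hw2 : w2 = wf
        · subst hw2
          exact Finset.mem_image.mpr ⟨b2, Finset.mem_univ _, rfl⟩
        · exfalso
          exact claimA wf 0 1 h01 (hwfull 0) (hwfull 1) _ heD
            (pg_adj_inl_inl.mpr (hclique w2 wf hw2 (hbe.trans hcwf.symm)))
      · exfalso
        rw [bIdx_inr] at hbe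
        subst hbe
        exact claimA wf 0 1 h01 (hwfull 0) (hwfull 1) _ heD
          (pg_adj_inl_inr.mpr hcwf).symm
    exact (Finset.card_le_card hsub).trans (Finset.card_image_le.trans (by simp))
  have h1 : s1.card ≤ 5 * PF.card :=
    Finset.card_le_mul_card_image_of_maps_to hmaps1 5 bound1
  -- the charging map on blocks with no full vertex
  set Q : V × Fin 5 → Prop := fun p => Sum.inl p ∈ D ∧
    (∀ w, c w = c p.1 → ∃ b, Sum.inl (w,b) ∉ D) ∧ 3 ≤ (fib (c p.1)).card with hQ
  set ρ : ((V × Fin 5) ⊕ Fin k) → Fin k := Sum.elim (fun p =>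
    if h : Q p then (crux p.1 p.2 h.1 h.2.1 h.2.2).choose else c p.1) id with hρ
  have ρ_inr : ∀ j : Fin k, ρ (Sum.inr j) = j := fun _ => rfl
  have ρ_pos : ∀ (u : V) (a : Fin 5) (h : Q (u,a)),
      ρ (Sum.inl (u,a)) = (crux u a h.1 h.2.1 h.2.2).choose := by
    intro u a h
    show (if h : Q (u,a) then _ else _) = _
    rw [dif_pos h]
  have ρ_neg : ∀ (u : V) (a : Fin 5), ¬ Q (u,a) → ρ (Sum.inl (u,a)) = c u := by
    intro u a h
    show (if h : Q (u,a) then _ else _) = _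
    rw [dif_neg h]
  -- non-full blocks: s2-membership gives the second component of Q
  have hQ2 : ∀ (u : V) (a : Fin 5), Sum.inl (u,a) ∈ s2 →
      ∀ w, c w = c u → ∃ b, Sum.inl (w,b) ∉ D := by
    intro u a hd w hcwu
    rw [hs2, Finset.mem_filter] at hd
    rw [bIdx_inl] at hd
    by_contra hall
    push_neg at hall
    exact hd.2 ⟨w, hcwu, hall⟩
  have hmaps2 : ∀ d ∈ s2, ρ d ∈ EF := by
    intro d hd
    have hdD : d ∈ D := (memDF d).mp (Finset.mem_filter.mp hd).1
    have hdnP := (Finset.mem_filter.mp hd).2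
    rcases d with ⟨u2, a2⟩ | j2
    · by_cases h : Q (u2, a2)
      · rw [ρ_pos u2 a2 h]
        obtain ⟨v, av, hfibj, _, _, _⟩ := (crux u2 a2 h.1 h.2.1 h.2.2).choose_spec
        rw [hEF, Finset.mem_filter]
        refine ⟨Finset.mem_univ _, ?_⟩
        rintro ⟨wf, hcwf, hwfull⟩
        have h0 : Sum.inl (wf, (0:Fin 5)) ∈ fib (c wf) :=
          (memfib _ _).mpr ⟨hwfull 0, bIdx_inl _ _⟩
        have h1' : Sum.inl (wf, (1:Fin 5)) ∈ fib (c wf) :=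
          (memfib _ _).mpr ⟨hwfull 1, bIdx_inl _ _⟩
        rw [hcwf, hfibj, Finset.mem_singleton] at h0 h1'
        have := h0.trans h1'.symm
        simp at this
      · rw [ρ_neg u2 a2 h, hEF, Finset.mem_filter]
        rw [bIdx_inl] at hdnP
        exact ⟨Finset.mem_univ _, hdnP⟩
    · rw [ρ_inr, hEF, Finset.mem_filter]
      rw [bIdx_inr] at hdnP
      exact ⟨Finset.mem_univ _, hdnP⟩
  have bound2 : ∀ j ∈ EF, (s2.filter (fun d => ρ d = j)).card ≤ 2 := by
    intro j _
    by_cases hk2 : ∃ (u2 : V) (a2 : Fin 5) (h : Q (u2,a2)),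
        Sum.inl (u2,a2) ∈ s2 ∧ ρ (Sum.inl (u2,a2)) = j
    · obtain ⟨u2, a2, h2, hmem2, hρ2⟩ := hk2
      obtain ⟨v, av, hfibj, hadj2, huniq2, husing2⟩ := (crux u2 a2 h2.1 h2.2.1 h2.2.2).choose_spec
      rw [ρ_pos u2 a2 h2] at hρ2
      rw [hρ2] at hfibj
      -- hfibj : fib j = {inl (v,av)}
      have hsub : s2.filter (fun d => ρ d = j) ⊆ {Sum.inl (v,av), Sum.inl (u2,a2)} := by
        intro e he
        rw [Finset.mem_filter] at he
        obtain ⟨hes2, heρ⟩ := he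
        have heD : e ∈ D := (memDF e).mp (Finset.mem_filter.mp hes2).1
        rcases e with ⟨u3, a3⟩ | j3
        · by_cases h3 : Q (u3, a3)
          · rw [ρ_pos u3 a3 h3] at heρ
            obtain ⟨v3, av3, hfib3, hadj3, huniq3, husing3⟩ :=
              (crux u3 a3 h3.1 h3.2.1 h3.2.2).choose_spec
            rw [heρ] at hfib3
            have hvv : (Sum.inl (v,av) : (V × Fin 5) ⊕ Fin k) = Sum.inl (v3,av3) :=
              Finset.singleton_inj.mp (hfibj.symm.trans hfib3)
            simp only [Sum.inl.injEq, Prod.mk.injEq] at hvv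
            have hu3 : u3 = u2 := huniq2 u3 a3 heD (hvv.1 ▸ hadj3)
            subst hu3
            have := husing2 a3 heD
            subst this
            simp
          · rw [ρ_neg u3 a3 h3] at heρ
            have : Sum.inl (u3,a3) ∈ fib j := (memfib _ _).mpr ⟨heD, by
              rw [bIdx_inl]; exact heρ⟩
            rw [hfibj, Finset.mem_singleton] at this
            simp [this]
        · exfalso
          rw [ρ_inr] at heρ
          subst heρ
          have : Sum.inr j3 ∈ fib j3 := (memfib _ _).mpr ⟨heD, bIdx_inr j3⟩
          rw [hfibj, Finset.mem_singleton] at this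
          exact absurd this (by simp)
      have h2' : ({Sum.inl (v,av), Sum.inl (u2,a2)} : Finset ((V × Fin 5) ⊕ Fin k)).card ≤ 2 :=
        (Finset.card_insert_le _ _).trans (by simp)
      exact (Finset.card_le_card hsub).trans h2'
    · push_neg at hk2
      by_cases hex : ∃ (u3 : V) (a3 : Fin 5),
          Sum.inl (u3,a3) ∈ s2 ∧ ρ (Sum.inl (u3,a3)) = j
      · obtain ⟨u3, a3, hmem3, hρ3⟩ := hex
        have h3 : ¬ Q (u3, a3) := fun h => hk2 u3 a3 h hmem3 hρ3
        have hD3 : Sum.inl (u3,a3) ∈ D := (memDF _).mp (Finset.mem_filter.mp hmem3).1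
        have hsmall : (fib (c u3)).card ≤ 2 := by
          by_contra hbig
          have hge : 3 ≤ (fib (c u3)).card := by omega
          exact h3 ⟨hD3, hQ2 u3 a3 hmem3, hge⟩
        rw [ρ_neg u3 a3 h3] at hρ3
        have hsub : s2.filter (fun d => ρ d = j) ⊆ fib (c u3) := by
          intro e he
          rw [Finset.mem_filter] at he
          obtain ⟨hes2, heρ⟩ := he
          have heD : e ∈ D := (memDF e).mp (Finset.mem_filter.mp hes2).1
          rcases e with ⟨u4, a4⟩ | j4
          · have h4 : ¬ Q (u4, a4) := fun h => hk2 u4 a4 h hes2 heρ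
            rw [ρ_neg u4 a4 h4] at heρ
            exact (memfib _ _).mpr ⟨heD, by rw [bIdx_inl, heρ, hρ3]⟩
          · rw [ρ_inr] at heρ
            subst heρ
            exact (memfib _ _).mpr ⟨heD, by rw [bIdx_inr, hρ3]⟩
        exact (Finset.card_le_card hsub).trans hsmall
      · push_neg at hex
        have hsub : s2.filter (fun d => ρ d = j) ⊆ {Sum.inr j} := by
          intro e he
          rw [Finset.mem_filter] at he
          obtain ⟨hes2, heρ⟩ := he
          rcases e with ⟨u4, a4⟩ | j4
          · exact absurd heρ (hex u4 a4 hes2)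
          · rw [ρ_inr] at heρ
            subst heρ
            simp
        exact (Finset.card_le_card hsub).trans (by simp)
  have h2 : s2.card ≤ 2 * EF.card :=
    Finset.card_le_mul_card_image_of_maps_to hmaps2 2 bound2
  -- assemble the counting
  have hsplit : s1.card + s2.card = DF.card := by
    rw [hs1, hs2]
    exact Finset.card_filter_add_card_filter_not _
  have hkk : PF.card + EF.card = k := by
    rw [hPF, hEF]
    have := Finset.card_filter_add_card_filter_not
      (s := (Finset.univ : Finset (Fin k))) (p := PP)
    simpa using this
  have hEF0 : EF.card = 0 := by omega
  have hPall : ∀ i, PP i := by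
    intro i
    by_contra hP
    have hiEF : i ∈ EF := by
      rw [hEF, Finset.mem_filter]
      exact ⟨Finset.mem_univ _, hP⟩
    rw [Finset.card_eq_zero] at hEF0
    rw [hEF0] at hiEF
    exact absurd hiEF (Finset.notMem_empty _)
  choose f hf1 hf2 using hPall
  refine ⟨Set.range f, ?_, ?_⟩
  · rintro x ⟨i, rfl⟩ y ⟨j', rfl⟩ hadj
    exact claimA (f i) 0 1 (by decide) (hf2 i 0) (hf2 i 1) (Sum.inl (f j', 0)) (hf2 j' 0)
      (pg_adj_inl_inl.mpr hadj.symm)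
  · have hinj : Function.Injective f := fun i j h => by
      rw [← hf1 i, ← hf1 j, h]
    rw [← Set.image_univ, Set.ncard_image_of_injective _ hinj]
    simp [Set.ncard_univ]
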